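/- Discrete Loomis–Whitney inequality: let n ≥ 2 and for i = 1,…,n let π_i : ℤⁿ → ℤ^{n-1} be the projection forgetting the i-th coordinate. Then for nonnegative functions g_i : ℤ^{n-1} → ℝ≥0, ‖∏_{i=1}^{n} g_i ∘ π_i‖_{ℓ^{1/(n-1)}(ℤⁿ)} ≤ ∏_{i=1}^{n} ‖g_i‖_{ℓ^1(ℤ^{n-1})}. -/

import Mathlib

open scoped NNReal ENNReal

open MeasureTheory


lemma tsum_holder {α ι : Type*} [Countable α] (s : Finset ι) (f : ι → α → ℝ≥0∞)
    {p : ι → ℝ} (hp : ∑ i ∈ s, p i = 1) (h2p : ∀ i ∈ s, 0 ≤ p i) :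
    ∑' a, ∏ i ∈ s, f i a ^ p i ≤ ∏ i ∈ s, (∑' a, f i a) ^ p i := by
  letI : MeasurableSpace α := ⊤
  haveI : MeasurableSingletonClass α := ⟨fun _ => trivial⟩
  have hmeas : ∀ (h : α → ℝ≥0∞), Measurable h := fun h s _ => trivial
  simpa [lintegral_count] using
    ENNReal.lintegral_prod_norm_pow_le (μ := Measure.count) s
      (fun i _ => (hmeas (f i)).aemeasurable) hp h2p

lemma tsum_holder2 {α : Type*} [Countable α] (f g : α → ℝ≥0∞)
    {p q : ℝ} (hp : 0 ≤ p) (hq : 0 ≤ q) (hpq : p + q = 1) :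
    ∑' a, f a ^ p * g a ^ q ≤ (∑' a, f a) ^ p * (∑' a, g a) ^ q := by
  letI : MeasurableSpace α := ⊤
  haveI : MeasurableSingletonClass α := ⟨fun _ => trivial⟩
  have hmeas : ∀ (h : α → ℝ≥0∞), Measurable h := fun h s _ => trivial
  simpa [lintegral_count] using
    ENNReal.lintegral_mul_norm_pow_le (μ := Measure.count)
      (hmeas f).aemeasurable (hmeas g).aemeasurable hp hq hpq

lemma tsum_split {n : ℕ} (F : (Fin (n+1) → ℤ) → ℝ≥0∞) :
    ∑' z : Fin (n+1) → ℤ, F z = ∑' t : ℤ, ∑' y : Fin n → ℤ, F (Fin.cons t y) := by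
  rw [← (Fin.consEquiv (fun _ : Fin (n+1) => ℤ)).tsum_eq F,
    ← ENNReal.tsum_prod (f := fun (t : ℤ) (y : Fin n → ℤ) => F (Fin.cons t y))]
  rfl

lemma cons_succAbove_succ {m : ℕ} (t : ℤ) (y : Fin (m+1) → ℤ) (j : Fin (m+1)) :
    (fun k => Fin.cons (α := fun _ => ℤ) t y (Fin.succAbove j.succ k))
      = Fin.cons t (fun k => y (j.succAbove k)) := by
  funext k
  induction k using Fin.cases with
  | zero => simp
  | succ k' => simp

lemma cons_succAbove_zero {m : ℕ} (t : ℤ) (y : Fin (m+1) → ℤ) :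
    (fun j => Fin.cons (α := fun _ => ℤ) t y ((0 : Fin (m+2)).succAbove j)) = y := by
  funext j
  simp [Fin.succAbove_zero]

lemma LW : ∀ m : ℕ, 1 ≤ m → ∀ f : Fin (m+1) → (Fin m → ℤ) → ℝ≥0∞,
    (∑' z : Fin (m+1) → ℤ, ∏ i, f i (fun j => z (i.succAbove j)))
      ≤ ∏ i, (∑' w : Fin m → ℤ, f i w ^ (m : ℝ)) ^ ((1:ℝ)/m) := by
  refine Nat.le_induction ?_ ?_
  · -- base case m = 1
    intro f
    show (∑' z : Fin 2 → ℤ, ∏ i : Fin 2, f i (fun j => z (i.succAbove j)))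
      ≤ ∏ i : Fin 2, (∑' w : Fin 1 → ℤ, f i w ^ ((1:ℕ) : ℝ)) ^ ((1:ℝ)/(1:ℕ))
    simp only [Nat.cast_one, ENNReal.rpow_one, div_one, Fin.prod_univ_two]
    refine le_of_eq ?_
    calc ∑' z : Fin 2 → ℤ, (f 0 fun j => z ((0:Fin 2).succAbove j)) * (f 1 fun j => z ((1:Fin 2).succAbove j))
        = ∑' t : ℤ, ∑' y : Fin 1 → ℤ, f 0 y * f 1 (fun _ => t) := by
          rw [tsum_split (fun z => (f 0 fun j => z ((0:Fin 2).succAbove j)) * (f 1 fun j => z ((1:Fin 2).succAbove j)))]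
          refine tsum_congr fun t => tsum_congr fun y => ?_
          have h1 : (fun j : Fin 1 => (Fin.cons t y : Fin 2 → ℤ) ((0:Fin 2).succAbove j)) = y :=
            cons_succAbove_zero (m := 0) t y
          have h2 : (fun j : Fin 1 => (Fin.cons t y : Fin 2 → ℤ) ((1:Fin 2).succAbove j)) = fun _ => t := by
            funext j; fin_cases j; rfl
          rw [h1, h2]
      _ = (∑' w : Fin 1 → ℤ, f 0 w) * ∑' t : ℤ, f 1 (fun _ => t) := by
          simp_rw [ENNReal.tsum_mul_right, ENNReal.tsum_mul_left]
      _ = (∑' w : Fin 1 → ℤ, f 0 w) * ∑' w : Fin 1 → ℤ, f 1 w := by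
          congr 1
          exact (Equiv.funUnique (Fin 1) ℤ).symm.tsum_eq (fun w => f 1 w)
  · -- inductive step
    intro m hm IH f
    have hm0 : (m : ℝ) ≠ 0 := by positivity
    have hm1 : (m : ℝ) + 1 ≠ 0 := by positivity
    have hp0 : (0:ℝ) ≤ 1/((m:ℝ)+1) := by positivity
    have hq0 : (0:ℝ) ≤ (m:ℝ)/((m:ℝ)+1) := by positivity
    have hpq : (1:ℝ)/((m:ℝ)+1) + (m:ℝ)/((m:ℝ)+1) = 1 := by
      rw [← add_div, add_comm]; exact div_self hm1
    have e1 : ((m:ℝ)+1) * (1/((m:ℝ)+1)) = 1 := by rw [mul_one_div]; exact div_self hm1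
    have e2 : ((m:ℝ)+1)/m * ((m:ℝ)/((m:ℝ)+1)) = 1 := by
      rw [div_mul_div_comm, mul_comm ((m:ℝ)+1) (m:ℝ)]; exact div_self (mul_ne_zero hm0 hm1)
    have e3 : (1:ℝ)/m * ((m:ℝ)/((m:ℝ)+1)) = 1/((m:ℝ)+1) := by field_simp
    have e4 : ((m:ℝ)+1)/m * m = (m:ℝ)+1 := div_mul_cancel₀ _ hm0
    have hcast : ((m + 1 : ℕ) : ℝ) = (m : ℝ) + 1 := by push_cast; ring
    rw [tsum_split]
    have key : ∀ t : ℤ,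
        (∑' y : Fin (m+1) → ℤ, ∏ i : Fin (m+2), f i (fun j => (Fin.cons t y : Fin (m+2) → ℤ) (i.succAbove j)))
          ≤ (∑' w : Fin (m+1) → ℤ, f 0 w ^ ((m:ℝ)+1)) ^ ((1:ℝ)/((m:ℝ)+1)) *
            ∏ j : Fin (m+1), (∑' w : Fin m → ℤ, (f j.succ (Fin.cons t w)) ^ ((m:ℝ)+1)) ^ ((1:ℝ)/((m:ℝ)+1)) := by
      intro t
      have hrw : ∀ y : Fin (m+1) → ℤ,
          (∏ i : Fin (m+2), f i (fun j => (Fin.cons t y : Fin (m+2) → ℤ) (i.succAbove j)))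
            = (f 0 y ^ ((m:ℝ)+1)) ^ ((1:ℝ)/((m:ℝ)+1)) *
              ((∏ j : Fin (m+1), (f j.succ (Fin.cons t (fun k => y (j.succAbove k)))) ^ (((m:ℝ)+1)/m)) ^ ((m:ℝ)/((m:ℝ)+1))) := by
        intro y
        rw [Fin.prod_univ_succ, cons_succAbove_zero t y, ← ENNReal.prod_rpow_of_nonneg hq0]
        congr 1
        · rw [← ENNReal.rpow_mul, e1, ENNReal.rpow_one]
        · refine Fintype.prod_congr _ _ fun (j : Fin (m+1)) => ?_
          rw [cons_succAbove_succ, ← ENNReal.rpow_mul, e2, ENNReal.rpow_one]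
      calc ∑' y : Fin (m+1) → ℤ, ∏ i : Fin (m+2), f i (fun j => (Fin.cons t y : Fin (m+2) → ℤ) (i.succAbove j))
          = ∑' y : Fin (m+1) → ℤ, (f 0 y ^ ((m:ℝ)+1)) ^ ((1:ℝ)/((m:ℝ)+1)) *
              ((∏ j : Fin (m+1), (f j.succ (Fin.cons t (fun k => y (j.succAbove k)))) ^ (((m:ℝ)+1)/m)) ^ ((m:ℝ)/((m:ℝ)+1))) :=
            tsum_congr hrw
        _ ≤ (∑' y : Fin (m+1) → ℤ, f 0 y ^ ((m:ℝ)+1)) ^ ((1:ℝ)/((m:ℝ)+1)) *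
              (∑' y : Fin (m+1) → ℤ, ∏ j : Fin (m+1),
                (f j.succ (Fin.cons t (fun k => y (j.succAbove k)))) ^ (((m:ℝ)+1)/m)) ^ ((m:ℝ)/((m:ℝ)+1)) :=
            tsum_holder2 _ _ hp0 hq0 hpq
        _ ≤ (∑' y : Fin (m+1) → ℤ, f 0 y ^ ((m:ℝ)+1)) ^ ((1:ℝ)/((m:ℝ)+1)) *
              ((∏ j : Fin (m+1), (∑' w : Fin m → ℤ,
                ((f j.succ (Fin.cons t w)) ^ (((m:ℝ)+1)/m)) ^ (m:ℝ)) ^ ((1:ℝ)/m)) ^ ((m:ℝ)/((m:ℝ)+1))) := by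
            gcongr
            exact IH (fun j w => (f j.succ (Fin.cons t w)) ^ (((m:ℝ)+1)/m))
        _ = (∑' w : Fin (m+1) → ℤ, f 0 w ^ ((m:ℝ)+1)) ^ ((1:ℝ)/((m:ℝ)+1)) *
            ∏ j : Fin (m+1), (∑' w : Fin m → ℤ, (f j.succ (Fin.cons t w)) ^ ((m:ℝ)+1)) ^ ((1:ℝ)/((m:ℝ)+1)) := by
            congr 1
            rw [← ENNReal.prod_rpow_of_nonneg hq0]
            refine Fintype.prod_congr _ _ fun (j : Fin (m+1)) => ?_
            rw [← ENNReal.rpow_mul, e3]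
            congr 1
            refine tsum_congr fun w => ?_
            rw [← ENNReal.rpow_mul, e4]
    calc ∑' t : ℤ, ∑' y : Fin (m+1) → ℤ,
            ∏ i : Fin (m+2), f i (fun j => (Fin.cons t y : Fin (m+2) → ℤ) (i.succAbove j))
        ≤ ∑' t : ℤ, (∑' w : Fin (m+1) → ℤ, f 0 w ^ ((m:ℝ)+1)) ^ ((1:ℝ)/((m:ℝ)+1)) *
            ∏ j : Fin (m+1), (∑' w : Fin m → ℤ, (f j.succ (Fin.cons t w)) ^ ((m:ℝ)+1)) ^ ((1:ℝ)/((m:ℝ)+1)) :=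
          ENNReal.tsum_le_tsum key
      _ = (∑' w : Fin (m+1) → ℤ, f 0 w ^ ((m:ℝ)+1)) ^ ((1:ℝ)/((m:ℝ)+1)) *
            ∑' t : ℤ, ∏ j : Fin (m+1), (∑' w : Fin m → ℤ, (f j.succ (Fin.cons t w)) ^ ((m:ℝ)+1)) ^ ((1:ℝ)/((m:ℝ)+1)) :=
          ENNReal.tsum_mul_left
      _ ≤ (∑' w : Fin (m+1) → ℤ, f 0 w ^ ((m:ℝ)+1)) ^ ((1:ℝ)/((m:ℝ)+1)) *
            ∏ j : Fin (m+1), (∑' t : ℤ, ∑' w : Fin m → ℤ, (f j.succ (Fin.cons t w)) ^ ((m:ℝ)+1)) ^ ((1:ℝ)/((m:ℝ)+1)) := by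
          gcongr
          have hsum : ∑ _j ∈ (Finset.univ : Finset (Fin (m+1))), (1:ℝ)/((m:ℝ)+1) = 1 := by
            rw [Finset.sum_const, Finset.card_univ, Fintype.card_fin, nsmul_eq_mul, hcast, e1]
          exact tsum_holder (α := ℤ) (ι := Fin (m+1)) Finset.univ
            (fun (j : Fin (m+1)) (t : ℤ) => ∑' w : Fin m → ℤ, (f j.succ (Fin.cons t w)) ^ ((m:ℝ)+1))
            (p := fun _ => (1:ℝ)/((m:ℝ)+1)) hsum (fun _ _ => hp0)
      _ = ∏ i : Fin (m+2), (∑' w : Fin (m+1) → ℤ, f i w ^ (((m+1:ℕ)):ℝ)) ^ ((1:ℝ)/((m+1:ℕ):ℝ)) := by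
          simp only [hcast]
          conv_rhs => rw [Fin.prod_univ_succ]
          congr 1
          refine Fintype.prod_congr _ _ fun (j : Fin (m+1)) => ?_
          congr 1
          exact (tsum_split (fun w => f j.succ w ^ ((m:ℝ)+1))).symm


/-- Discrete Loomis–Whitney inequality: with `n = m + 1 ≥ 2` and `π_i : ℤⁿ → ℤ^{n-1}`
forgetting the `i`-th coordinate,
`‖∏ g_i ∘ π_i‖_{ℓ^{1/(n-1)}(ℤⁿ)} ≤ ∏ ‖g_i‖_{ℓ^1(ℤ^{n-1})}`. -/
theorem stmt3 (m : ℕ) (hm : 1 ≤ m) (g : Fin (m + 1) → (Fin m → ℤ) → ℝ≥0) :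
    (∑' z : Fin (m + 1) → ℤ,
        (∏ i, ((g i fun j => z (Fin.succAbove i j) : ℝ≥0) : ℝ≥0∞)) ^ ((1 : ℝ) / m)) ^ (m : ℝ) ≤
      ∏ i, ∑' w : Fin m → ℤ, ((g i w : ℝ≥0) : ℝ≥0∞) := by
  have hm0 : (m : ℝ) ≠ 0 := by positivity
  have e5 : (1:ℝ)/m * m = 1 := one_div_mul_cancel hm0
  have h := LW m hm (fun i w => ((g i w : ℝ≥0) : ℝ≥0∞) ^ ((1:ℝ)/m))
  have hL : (∑' z : Fin (m + 1) → ℤ,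
      (∏ i, ((g i fun j => z (Fin.succAbove i j) : ℝ≥0) : ℝ≥0∞)) ^ ((1 : ℝ) / m))
      ≤ ∏ i, (∑' w : Fin m → ℤ, ((g i w : ℝ≥0) : ℝ≥0∞)) ^ ((1:ℝ)/m) := by
    refine le_trans (le_of_eq ?_) (le_trans h (le_of_eq ?_))
    · refine tsum_congr fun z => ?_
      exact (ENNReal.prod_rpow_of_nonneg (by positivity : (0:ℝ) ≤ 1/m)).symm
    · refine Fintype.prod_congr _ _ fun i => ?_
      congr 1
      refine tsum_congr fun w => ?_
      rw [← ENNReal.rpow_mul, e5, ENNReal.rpow_one]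
  calc (∑' z : Fin (m + 1) → ℤ,
        (∏ i, ((g i fun j => z (Fin.succAbove i j) : ℝ≥0) : ℝ≥0∞)) ^ ((1 : ℝ) / m)) ^ (m : ℝ)
      ≤ (∏ i, (∑' w : Fin m → ℤ, ((g i w : ℝ≥0) : ℝ≥0∞)) ^ ((1:ℝ)/m)) ^ (m : ℝ) :=
        ENNReal.rpow_le_rpow hL (by positivity)
    _ = ∏ i, ∑' w : Fin m → ℤ, ((g i w : ℝ≥0) : ℝ≥0∞) := by
        rw [ENNReal.prod_rpow_of_nonneg (by positivity : (0:ℝ) ≤ 1/m),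
          ← ENNReal.rpow_mul, e5, ENNReal.rpow_one]
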